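/- Let a = (a_0,…,a_ℓ) be a filter of order ν ≥ 1, i.e. Σ_{q=0}^ℓ q^j a_q = 0 for j = 0,…,ν−1. Then the function γ^a(j) = −(1/2) Σ_{q,q'=0}^ℓ a_q a_{q'} |q − q' + j|^{2H}, for 0 < H < 1, satisfies γ^a(j) = O(|j|^{2H−2ν}) as |j| → ∞. -/

import Mathlib

open Finset


lemma iter_rpow {p lo hi : ℝ} (hlo : 0 < lo) (hlt : lo < hi) (n : ℕ) :
    ∀ x ∈ Set.Icc lo hi, iteratedDerivWithin n (fun y : ℝ => y ^ p) (Set.Icc lo hi) x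
      = (∏ i ∈ Finset.range n, (p - i)) * x ^ (p - n) := by
  induction n with
  | zero => intro x hx; simp
  | succ n ih =>
    intro x hx
    have hud := uniqueDiffOn_Icc hlt
    rw [iteratedDerivWithin_succ]
    have hx0 : x ≠ 0 := (lt_of_lt_of_le hlo hx.1).ne'
    have hd : HasDerivAt (fun y : ℝ => (∏ i ∈ Finset.range n, (p - i)) * y ^ (p - n))
        ((∏ i ∈ Finset.range n, (p - i)) * ((p - n) * x ^ (p - n - 1))) x :=
      (Real.hasDerivAt_rpow_const (Or.inl hx0)).const_mul _
    have hdw : HasDerivWithinAt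
        (iteratedDerivWithin n (fun y : ℝ => y ^ p) (Set.Icc lo hi))
        ((∏ i ∈ Finset.range n, (p - i)) * ((p - n) * x ^ (p - n - 1))) (Set.Icc lo hi) x :=
      (hd.hasDerivWithinAt).congr (fun y hy => ih y hy) (ih x hx)
    rw [hdw.derivWithin (hud x hx), Finset.prod_range_succ,
      show ((n + 1 : ℕ) : ℝ) = (n : ℝ) + 1 by push_cast; ring,
      show p - ((n : ℝ) + 1) = p - n - 1 by ring]
    ring


lemma swap3 (s t u : Finset ℕ) (F : ℕ → ℕ → ℕ → ℝ) :
    ∑ q ∈ s, ∑ q' ∈ t, ∑ i ∈ u, F q q' i = ∑ i ∈ u, ∑ q ∈ s, ∑ q' ∈ t, F q q' i := by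
  calc ∑ q ∈ s, ∑ q' ∈ t, ∑ i ∈ u, F q q' i
      = ∑ q ∈ s, ∑ i ∈ u, ∑ q' ∈ t, F q q' i :=
        Finset.sum_congr rfl fun q _ => Finset.sum_comm
    _ = ∑ i ∈ u, ∑ q ∈ s, ∑ q' ∈ t, F q q' i := Finset.sum_comm

lemma filtA0 {ℓ ν : ℕ} {a : ℕ → ℝ}
    (hfilt : ∀ j < ν, ∑ q ∈ Finset.range (ℓ + 1), (q : ℝ) ^ j * a q = 0)
    {m : ℕ} (hm : m < ν) (c : ℝ) :
    ∑ q ∈ Finset.range (ℓ + 1), a q * ((q : ℝ) + c) ^ m = 0 := by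
  have hexp : ∀ q : ℕ, ((q : ℝ) + c) ^ m
      = ∑ i ∈ Finset.range (m + 1), (q : ℝ) ^ i * (c ^ (m - i) * (m.choose i)) := by
    intro q; rw [add_pow]
    exact Finset.sum_congr rfl fun i _ => by ring
  simp_rw [hexp, Finset.mul_sum]
  rw [Finset.sum_comm]
  refine Finset.sum_eq_zero fun i hi => ?_
  have h1 : ∑ q ∈ Finset.range (ℓ + 1), a q * ((q : ℝ) ^ i * (c ^ (m - i) * (m.choose i)))
      = (∑ q ∈ Finset.range (ℓ + 1), (q : ℝ) ^ i * a q) * (c ^ (m - i) * (m.choose i)) := by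
    rw [Finset.sum_mul]; exact Finset.sum_congr rfl fun q _ => by ring
  rw [h1, hfilt i (lt_of_le_of_lt (Nat.lt_succ_iff.mp (Finset.mem_range.mp hi)) hm), zero_mul]

lemma filtVan {ℓ ν : ℕ} {a : ℕ → ℝ}
    (hfilt : ∀ j < ν, ∑ q ∈ Finset.range (ℓ + 1), (q : ℝ) ^ j * a q = 0)
    {k : ℕ} (hk : k < 2 * ν) (c : ℝ) :
    ∑ q ∈ Finset.range (ℓ + 1), ∑ q' ∈ Finset.range (ℓ + 1),
      a q * a q' * ((q : ℝ) - (q' : ℝ) + c) ^ k = 0 := by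
  have hexp : ∀ q q' : ℕ, ((q : ℝ) - (q' : ℝ) + c) ^ k
      = ∑ i ∈ Finset.range (k + 1),
          ((q : ℝ) + c) ^ i * ((-(q' : ℝ)) ^ (k - i) * (k.choose i)) := by
    intro q q'
    rw [show (q : ℝ) - (q' : ℝ) + c = ((q : ℝ) + c) + (-(q' : ℝ)) by ring, add_pow]
    exact Finset.sum_congr rfl fun i _ => by ring
  simp_rw [hexp, Finset.mul_sum]
  rw [swap3]
  refine Finset.sum_eq_zero fun i hi => ?_
  have hik : i ≤ k := Nat.lt_succ_iff.mp (Finset.mem_range.mp hi)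
  have hfac : ∑ q ∈ Finset.range (ℓ + 1), ∑ q' ∈ Finset.range (ℓ + 1),
        a q * a q' * (((q : ℝ) + c) ^ i * ((-(q' : ℝ)) ^ (k - i) * (k.choose i)))
      = ((∑ q ∈ Finset.range (ℓ + 1), a q * ((q : ℝ) + c) ^ i)
          * (∑ q' ∈ Finset.range (ℓ + 1), a q' * (-(q' : ℝ)) ^ (k - i))) * (k.choose i) := by
    rw [Finset.sum_mul_sum, Finset.sum_mul]
    refine Finset.sum_congr rfl fun q _ => ?_
    rw [Finset.sum_mul]
    exact Finset.sum_congr rfl fun q' _ => by ring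
  rw [hfac]
  rcases lt_or_ge i ν with hi' | hi'
  · rw [filtA0 hfilt hi' c, zero_mul, zero_mul]
  · have hki : k - i < ν := by omega
    have h2 : ∑ q' ∈ Finset.range (ℓ + 1), a q' * (-(q' : ℝ)) ^ (k - i)
        = (-1 : ℝ) ^ (k - i) * ∑ q' ∈ Finset.range (ℓ + 1), (q' : ℝ) ^ (k - i) * a q' := by
      rw [Finset.mul_sum]
      exact Finset.sum_congr rfl fun q' _ => by rw [neg_pow]; ring
    rw [h2, hfilt _ hki, mul_zero, mul_zero, zero_mul]

lemma keybound {ℓ ν : ℕ} (hℓ : 1 ≤ ℓ) (hν : 1 ≤ ν) {a : ℕ → ℝ} {H : ℝ}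
    (hH : 0 < H) (hH1 : H < 1)
    (hfilt : ∀ j < ν, ∑ q ∈ Finset.range (ℓ + 1), (q : ℝ) ^ j * a q = 0) :
    ∃ C > (0 : ℝ), ∀ t : ℝ, (2 * (ℓ : ℝ) + 2) ≤ t →
      |∑ q ∈ Finset.range (ℓ + 1), ∑ q' ∈ Finset.range (ℓ + 1),
          a q * a q' * |(q : ℝ) - (q' : ℝ) + t| ^ (2 * H)|
        ≤ C * t ^ (2 * H - 2 * (ν : ℝ)) := by
  set n : ℕ := 2 * ν - 1 with hn
  have hn1 : n + 1 = 2 * ν := by omega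
  set g : ℝ := 2 * H - 2 * (ν : ℝ) with hg
  have hν1 : (1 : ℝ) ≤ (ν : ℝ) := by exact_mod_cast hν
  have hg0 : g ≤ 0 := by simp only [hg]; nlinarith
  set K : ℝ := |∏ i ∈ Finset.range (n + 1), (2 * H - (i : ℝ))| with hK
  set A : ℝ := ∑ q ∈ Finset.range (ℓ + 1), |a q| with hA
  have hA0 : 0 ≤ A := Finset.sum_nonneg fun _ _ => abs_nonneg _
  have hK0 : 0 ≤ K := abs_nonneg _
  set Cm : ℝ := A * A * (K * (2 * (ℓ : ℝ)) ^ (n + 1) / (n.factorial : ℝ) * (2 : ℝ) ^ (-g))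
    with hCm
  have hCm0 : 0 ≤ Cm := by positivity
  refine ⟨Cm + 1, by positivity, fun t ht => ?_⟩
  have hℓ1 : (1 : ℝ) ≤ (ℓ : ℝ) := by exact_mod_cast hℓ
  have ht0 : 0 < t := by linarith
  set lo : ℝ := t - ℓ with hlo'
  set hi : ℝ := t + ℓ with hhi'
  have hlo : 0 < lo := by simp only [hlo']; linarith
  have hlt : lo < hi := by simp only [hlo', hhi']; linarith
  have ht2 : t / 2 ≤ lo := by simp only [hlo']; linarith
  set f : ℝ → ℝ := fun y => y ^ (2 * H) with hf
  -- smoothness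
  have hcd : ContDiffOn ℝ (n + 1 : ℕ) f (Set.Icc lo hi) := by
    intro y hy
    exact (Real.contDiffAt_rpow_const_of_ne (lt_of_lt_of_le hlo hy.1).ne').contDiffWithinAt
  -- derivative bound
  set Cb : ℝ := K * lo ^ g with hCb
  have hCb0 : 0 ≤ Cb := by positivity
  have hexp : 2 * H - ((n + 1 : ℕ) : ℝ) = g := by
    rw [hn1]; push_cast; rw [hg]
  have hder : ∀ y ∈ Set.Icc lo hi, ‖iteratedDerivWithin (n + 1) f (Set.Icc lo hi) y‖ ≤ Cb := by
    intro y hy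
    have hy0 : 0 < y := lt_of_lt_of_le hlo hy.1
    rw [Real.norm_eq_abs, iter_rpow hlo hlt (n + 1) y hy, hexp, abs_mul,
      abs_of_pos (Real.rpow_pos_of_pos hy0 _), hCb, hK]
    exact mul_le_mul_of_nonneg_left (Real.rpow_le_rpow_of_nonpos hlo hy.1 hg0) (abs_nonneg _)
  -- the Taylor polynomial
  set P : ℝ → ℝ := fun x => taylorWithinEval f n (Set.Icc lo hi) lo x with hP
  set B : ℝ := Cb * (2 * (ℓ : ℝ)) ^ (n + 1) / (n.factorial : ℝ) with hB
  -- membership and pointwise remainder bound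
  have hmem : ∀ q ∈ Finset.range (ℓ + 1), ∀ q' ∈ Finset.range (ℓ + 1),
      ((q : ℝ) - (q' : ℝ) + t) ∈ Set.Icc lo hi := by
    intro q hq q' hq'
    have h1 : (q : ℝ) ≤ ℓ := by exact_mod_cast Nat.lt_succ_iff.mp (Finset.mem_range.mp hq)
    have h2 : (q' : ℝ) ≤ ℓ := by exact_mod_cast Nat.lt_succ_iff.mp (Finset.mem_range.mp hq')
    have h3 : (0 : ℝ) ≤ q := Nat.cast_nonneg q
    have h4 : (0 : ℝ) ≤ q' := Nat.cast_nonneg q'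
    constructor <;> simp only [hlo', hhi'] <;> linarith
  have hrem : ∀ q ∈ Finset.range (ℓ + 1), ∀ q' ∈ Finset.range (ℓ + 1),
      |f ((q : ℝ) - (q' : ℝ) + t) - P ((q : ℝ) - (q' : ℝ) + t)| ≤ B := by
    intro q hq q' hq'
    have hx := hmem q hq q' hq'
    have h1 : (q : ℝ) ≤ ℓ := by exact_mod_cast Nat.lt_succ_iff.mp (Finset.mem_range.mp hq)
    have h4 : (0 : ℝ) ≤ q' := Nat.cast_nonneg q'
    have hb := taylor_mean_remainder_bound hlt.le hcd hx hder
    rw [Real.norm_eq_abs] at hb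
    refine hb.trans ?_
    simp only [hB]
    gcongr
    · exact sub_nonneg.mpr hx.1
    · simp only [hlo']; linarith
  -- the Taylor part vanishes
  have hT0 : ∑ q ∈ Finset.range (ℓ + 1), ∑ q' ∈ Finset.range (ℓ + 1),
      a q * a q' * P ((q : ℝ) - (q' : ℝ) + t) = 0 := by
    have hPT : ∀ x : ℝ, P x = ∑ k ∈ Finset.range (n + 1),
        ((k.factorial : ℝ)⁻¹ * (x - lo) ^ k) * iteratedDerivWithin k f (Set.Icc lo hi) lo := by
      intro x
      simp only [hP]
      rw [taylor_within_apply]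
      exact Finset.sum_congr rfl fun k _ => by rw [smul_eq_mul]
    simp_rw [hPT, Finset.mul_sum]
    rw [swap3]
    refine Finset.sum_eq_zero fun k hk => ?_
    have hk2ν : k < 2 * ν := by
      have := Finset.mem_range.mp hk; omega
    have hfac : ∑ q ∈ Finset.range (ℓ + 1), ∑ q' ∈ Finset.range (ℓ + 1),
          a q * a q' * (((k.factorial : ℝ)⁻¹ * ((q : ℝ) - (q' : ℝ) + t - lo) ^ k)
            * iteratedDerivWithin k f (Set.Icc lo hi) lo)
        = ((k.factorial : ℝ)⁻¹ * iteratedDerivWithin k f (Set.Icc lo hi) lo)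
            * ∑ q ∈ Finset.range (ℓ + 1), ∑ q' ∈ Finset.range (ℓ + 1),
                a q * a q' * ((q : ℝ) - (q' : ℝ) + (ℓ : ℝ)) ^ k := by
      rw [Finset.mul_sum]
      refine Finset.sum_congr rfl fun q _ => ?_
      rw [Finset.mul_sum]
      refine Finset.sum_congr rfl fun q' _ => ?_
      rw [show (q : ℝ) - (q' : ℝ) + t - lo = (q : ℝ) - (q' : ℝ) + (ℓ : ℝ) by
        simp only [hlo']; ring]
      ring
    rw [hfac, filtVan hfilt hk2ν, mul_zero]
  -- rewrite the absolute values away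
  have habs : ∑ q ∈ Finset.range (ℓ + 1), ∑ q' ∈ Finset.range (ℓ + 1),
        a q * a q' * |(q : ℝ) - (q' : ℝ) + t| ^ (2 * H)
      = ∑ q ∈ Finset.range (ℓ + 1), ∑ q' ∈ Finset.range (ℓ + 1),
          a q * a q' * f ((q : ℝ) - (q' : ℝ) + t) := by
    refine Finset.sum_congr rfl fun q hq => Finset.sum_congr rfl fun q' hq' => ?_
    simp only [hf]
    rw [abs_of_pos (lt_of_lt_of_le hlo (hmem q hq q' hq').1)]
  have hsplit : ∑ q ∈ Finset.range (ℓ + 1), ∑ q' ∈ Finset.range (ℓ + 1),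
        a q * a q' * f ((q : ℝ) - (q' : ℝ) + t)
      = ∑ q ∈ Finset.range (ℓ + 1), ∑ q' ∈ Finset.range (ℓ + 1),
          a q * a q' * (f ((q : ℝ) - (q' : ℝ) + t) - P ((q : ℝ) - (q' : ℝ) + t)) := by
    simp_rw [mul_sub, Finset.sum_sub_distrib]
    rw [hT0, sub_zero]
  rw [habs, hsplit]
  have hbound : |∑ q ∈ Finset.range (ℓ + 1), ∑ q' ∈ Finset.range (ℓ + 1),
        a q * a q' * (f ((q : ℝ) - (q' : ℝ) + t) - P ((q : ℝ) - (q' : ℝ) + t))|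
      ≤ A * (A * B) := by
    calc |∑ q ∈ Finset.range (ℓ + 1), ∑ q' ∈ Finset.range (ℓ + 1),
          a q * a q' * (f ((q : ℝ) - (q' : ℝ) + t) - P ((q : ℝ) - (q' : ℝ) + t))|
        ≤ ∑ q ∈ Finset.range (ℓ + 1), ∑ q' ∈ Finset.range (ℓ + 1),
            |a q| * (|a q'| * B) := by
          refine (Finset.abs_sum_le_sum_abs _ _).trans (Finset.sum_le_sum fun q hq => ?_)
          refine (Finset.abs_sum_le_sum_abs _ _).trans (Finset.sum_le_sum fun q' hq' => ?_)
          rw [abs_mul, abs_mul, mul_assoc]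
          exact mul_le_mul_of_nonneg_left
            (mul_le_mul_of_nonneg_left (hrem q hq q' hq') (abs_nonneg _)) (abs_nonneg _)
      _ = A * (A * B) := by
          have inner : ∀ q : ℕ,
              (∑ q' ∈ Finset.range (ℓ + 1), |a q| * (|a q'| * B)) = |a q| * (A * B) :=
            fun q => by rw [← Finset.mul_sum, ← Finset.sum_mul, ← hA]
          rw [Finset.sum_congr rfl (fun q _ => inner q), ← Finset.sum_mul, ← hA]
  refine hbound.trans ?_
  -- final comparison
  have h2g : (0 : ℝ) < (2 : ℝ) ^ (-g) := Real.rpow_pos_of_pos (by norm_num) _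
  have hlog : lo ^ g ≤ (2 : ℝ) ^ (-g) * t ^ g := by
    have h1 : lo ^ g ≤ (t / 2) ^ g :=
      Real.rpow_le_rpow_of_nonpos (by positivity) ht2 hg0
    have h2 : (t / 2 : ℝ) ^ g = t ^ g / (2 : ℝ) ^ g :=
      Real.div_rpow ht0.le (by norm_num) g
    have h3 : ((2 : ℝ) ^ g)⁻¹ = (2 : ℝ) ^ (-g) := by
      rw [← Real.rpow_neg (by norm_num)]
    rw [h2, div_eq_mul_inv, h3, mul_comm] at h1
    exact h1
  have hBle : B ≤ K * (2 * (ℓ : ℝ)) ^ (n + 1) / (n.factorial : ℝ) * ((2 : ℝ) ^ (-g) * t ^ g) := by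
    have : B = K * (2 * (ℓ : ℝ)) ^ (n + 1) / (n.factorial : ℝ) * lo ^ g := by
      simp only [hB, hCb]; ring
    rw [this]
    exact mul_le_mul_of_nonneg_left hlog (by positivity)
  have htg : (0 : ℝ) < t ^ g := Real.rpow_pos_of_pos ht0 _
  calc A * (A * B)
      ≤ A * (A * (K * (2 * (ℓ : ℝ)) ^ (n + 1) / (n.factorial : ℝ)
          * ((2 : ℝ) ^ (-g) * t ^ g))) := by
        exact mul_le_mul_of_nonneg_left (mul_le_mul_of_nonneg_left hBle hA0) hA0
    _ = Cm * t ^ g := by simp only [hCm]; ring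
    _ ≤ (Cm + 1) * t ^ g := by nlinarith

/-- for a filter `a` of order `ν ≥ 1`, the function
`γ^a(j) = −(1/2) Σ_{q,q'} a_q a_{q'} |q − q' + j|^{2H}` is `O(|j|^{2H−2ν})`
as `|j| → ∞`. -/
theorem stmt2 (ℓ ν : ℕ) (hν : 1 ≤ ν) (a : ℕ → ℝ) (H : ℝ) (hH : 0 < H) (hH1 : H < 1)
    (hfilt : ∀ j < ν, ∑ q ∈ Finset.range (ℓ + 1), (q : ℝ) ^ j * a q = 0)
    (hord : ∑ q ∈ Finset.range (ℓ + 1), (q : ℝ) ^ ν * a q ≠ 0) :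
    ∃ C > (0 : ℝ), ∃ J : ℕ, ∀ j : ℤ, (J : ℝ) ≤ |(j : ℝ)| →
      |(-(1 : ℝ) / 2) * ∑ q ∈ Finset.range (ℓ + 1), ∑ q' ∈ Finset.range (ℓ + 1),
          a q * a q' * |(q : ℝ) - (q' : ℝ) + (j : ℝ)| ^ (2 * H)|
        ≤ C * |(j : ℝ)| ^ (2 * H - 2 * (ν : ℝ)) := by
  have hℓ : 1 ≤ ℓ := by
    by_contra h
    have hℓ0 : ℓ = 0 := by omega
    subst hℓ0
    have h0 := hfilt 0 hν
    simp [Finset.sum_range_one] at h0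
    apply hord
    simp [Finset.sum_range_one, h0, zero_pow (by omega : ν ≠ 0)]
  obtain ⟨C₀, hC₀, hkey⟩ := keybound hℓ hν hH hH1 hfilt
  refine ⟨C₀, hC₀, 2 * ℓ + 2, fun j hj => ?_⟩
  have hJ : ((2 * ℓ + 2 : ℕ) : ℝ) = 2 * (ℓ : ℝ) + 2 := by push_cast; ring
  rw [hJ] at hj
  have habs2 : |(-(1:ℝ)/2)| = 1/2 := by norm_num
  rcases le_or_gt 0 (j : ℝ) with hj0 | hj0
  · rw [abs_of_nonneg hj0] at hj ⊢
    have hb := hkey (j : ℝ) hj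
    rw [abs_mul, habs2]
    have h2 : (0:ℝ) ≤ C₀ * (j:ℝ) ^ (2 * H - 2 * (ν : ℝ)) := le_trans (abs_nonneg _) hb
    linarith
  · have habsj : |(j : ℝ)| = -(j : ℝ) := abs_of_neg hj0
    rw [habsj] at hj ⊢
    have hswap : ∑ q ∈ Finset.range (ℓ + 1), ∑ q' ∈ Finset.range (ℓ + 1),
          a q * a q' * |(q : ℝ) - (q' : ℝ) + (j : ℝ)| ^ (2 * H)
        = ∑ q ∈ Finset.range (ℓ + 1), ∑ q' ∈ Finset.range (ℓ + 1),
            a q * a q' * |(q : ℝ) - (q' : ℝ) + (-(j : ℝ))| ^ (2 * H) := by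
      rw [Finset.sum_comm]
      refine Finset.sum_congr rfl fun q _ => Finset.sum_congr rfl fun q' _ => ?_
      rw [show (q' : ℝ) - (q : ℝ) + (j : ℝ) = -((q : ℝ) - (q' : ℝ) + (-(j : ℝ))) by ring,
        abs_neg]
      ring
    rw [hswap]
    have hb := hkey (-(j : ℝ)) hj
    rw [abs_mul, habs2]
    have h2 : (0:ℝ) ≤ C₀ * (-(j:ℝ)) ^ (2 * H - 2 * (ν : ℝ)) := le_trans (abs_nonneg _) hb
    linarith
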